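/- Let λ₁,…,λ_N ∈ ℂ satisfy λⱼ* ≠ λᵢ and λⱼ* ≠ −λᵢ for all i,j, and let φᵢ = (φᵢ⁽¹⁾, φᵢ⁽²⁾)ᵀ : ℝ² → ℂ² satisfy the involution φᵢ⁽¹⁾(−ξ,−t) = −i·φᵢ⁽²⁾(ξ,t) and φᵢ⁽²⁾(−ξ,−t) = i·φᵢ⁽¹⁾(ξ,t) for all (ξ,t). Then the matrix M satisfies M(ξ,t) = −M(−ξ,−t)† for all (ξ,t). -/

import Mathlib

open Matrix Complex

/-- Partial derivative in the first (space) variable. -/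
noncomputable def dx (f : ℝ × ℝ → ℂ) (p : ℝ × ℝ) : ℂ :=
  deriv (fun x => f (x, p.2)) p.1

/-- Partial derivative in the second (time) variable. -/
noncomputable def dt (f : ℝ × ℝ → ℂ) (p : ℝ × ℝ) : ℂ :=
  deriv (fun t => f (p.1, t)) p.2

/-- The derivative nonlinear Schrödinger equation `i uₜ + uₓₓ + 2 i (|u|² u)ₓ = 0`. -/
def IsDNLSSolution (u : ℝ × ℝ → ℂ) : Prop :=
  ∀ p : ℝ × ℝ,
    Complex.I * dt u p + dx (fun q => dx u q) p +
      2 * Complex.I * dx (fun q => (Complex.normSq (u q) : ℂ) * u q) p = 0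

/-- The Pauli matrix `σ₃ = diag(1, -1)`. -/
noncomputable def sigma3 : Matrix (Fin 2) (Fin 2) ℂ := !![1, 0; 0, -1]

/-- The potential matrix `Q = [[0, i u], [i u*, 0]]`. -/
noncomputable def Qmat (u : ℝ × ℝ → ℂ) (p : ℝ × ℝ) : Matrix (Fin 2) (Fin 2) ℂ :=
  !![0, Complex.I * u p; Complex.I * (starRingEnd ℂ) (u p), 0]

/-- The Lax-pair matrix `U(Q;λ) = -2 i λ² σ₃ + 2 λ Q`. -/
noncomputable def Umat (u : ℝ × ℝ → ℂ) (l : ℂ) (p : ℝ × ℝ) : Matrix (Fin 2) (Fin 2) ℂ :=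
  (-2 * Complex.I * l ^ 2) • sigma3 + (2 * l) • Qmat u p

/-- The Lax-pair matrix `V(Q;λ) = (4 λ² + 2 Q²) U(Q;λ) + 2 i λ σ₃ Qₓ`. -/
noncomputable def Vmat (u : ℝ × ℝ → ℂ) (l : ℂ) (p : ℝ × ℝ) : Matrix (Fin 2) (Fin 2) ℂ :=
  ((4 * l ^ 2) • (1 : Matrix (Fin 2) (Fin 2) ℂ) + (2 : ℂ) • (Qmat u p * Qmat u p)) * Umat u l p
    + (2 * Complex.I * l) • (sigma3 * Matrix.of fun i j => dx (fun q => Qmat u q i j) p)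

/-- Componentwise spatial derivative of a vector-valued function. -/
noncomputable def dxv {n : ℕ} (f : ℝ × ℝ → Fin n → ℂ) (p : ℝ × ℝ) : Fin n → ℂ :=
  fun i => dx (fun q => f q i) p

/-- Componentwise temporal derivative of a vector-valued function. -/
noncomputable def dtv {n : ℕ} (f : ℝ × ℝ → Fin n → ℂ) (p : ℝ × ℝ) : Fin n → ℂ :=
  fun i => dt (fun q => f q i) p

/-- `φ` solves the Lax pair `φₓ = U(Q;λ)φ`, `φₜ = V(Q;λ)φ` at spectral parameter `λ`. -/
def IsLaxSolution (u : ℝ × ℝ → ℂ) (l : ℂ) (φ : ℝ × ℝ → Fin 2 → ℂ) : Prop :=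
  ∀ p : ℝ × ℝ, dxv φ p = Umat u l p *ᵥ φ p ∧ dtv φ p = Vmat u l p *ᵥ φ p

/-- The matrix `M` with entries
`M_{ij} = (φⱼ†φᵢ/(λⱼ* − λᵢ) − φⱼ†σ₃φᵢ/(λⱼ* + λᵢ)) λᵢ λⱼ*`. -/
noncomputable def Mmat {N : ℕ} (l : Fin N → ℂ) (φ : Fin N → ℝ × ℝ → Fin 2 → ℂ)
    (p : ℝ × ℝ) : Matrix (Fin N) (Fin N) ℂ :=
  Matrix.of fun i j =>
    ((star (φ j p) ⬝ᵥ φ i p) / (starRingEnd ℂ (l j) - l i)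
      - (star (φ j p) ⬝ᵥ (sigma3 *ᵥ φ i p)) / (starRingEnd ℂ (l j) + l i))
      * (l i * starRingEnd ℂ (l j))

/-- The vector `φ⁽ᵏ⁾ = (φ₁⁽ᵏ⁾, …, φ_N⁽ᵏ⁾)ᵀ` (with `k = 0` the first components,
`k = 1` the second components). -/
noncomputable def phiVec {N : ℕ} (φ : Fin N → ℝ × ℝ → Fin 2 → ℂ) (k : Fin 2)
    (p : ℝ × ℝ) : Fin N → ℂ :=
  fun i => φ i p k
/-- If the eigenfunctions satisfy the involution
`φᵢ⁽¹⁾(−ξ,−t) = −i φᵢ⁽²⁾(ξ,t)`, `φᵢ⁽²⁾(−ξ,−t) = i φᵢ⁽¹⁾(ξ,t)`, then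
`M(ξ,t) = −M(−ξ,−t)†`. -/
theorem Mmat_symmetry {N : ℕ} (l : Fin N → ℂ)
    (hl : ∀ i j, starRingEnd ℂ (l j) ≠ l i ∧ starRingEnd ℂ (l j) ≠ -(l i))
    (φ : Fin N → ℝ × ℝ → Fin 2 → ℂ)
    (hinv : ∀ i, ∀ ξ t : ℝ,
      φ i (-ξ, -t) 0 = -Complex.I * φ i (ξ, t) 1 ∧
      φ i (-ξ, -t) 1 = Complex.I * φ i (ξ, t) 0) :
    ∀ ξ t : ℝ, Mmat l φ (ξ, t) = -(Mmat l φ (-ξ, -t))ᴴ := by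
  intro ξ t
  ext i j
  obtain ⟨hi0, hi1⟩ := hinv i ξ t
  obtain ⟨hj0, hj1⟩ := hinv j ξ t
  have hci := (hl i j).1
  have hci' := (hl i j).2
  simp only [Mmat, Matrix.neg_apply, Matrix.conjTranspose_apply, Matrix.of_apply,
    dotProduct, Fin.sum_univ_two, Pi.star_apply, sigma3, Matrix.mulVec,
    Matrix.cons_val_zero, Matrix.cons_val_one, Matrix.head_cons,
    Fin.isValue, hi0, hi1, hj0, hj1, map_sub, map_add, _root_.map_mul, map_div₀,
    map_neg, Complex.conj_I, Complex.I_mul_I, Complex.conj_conj, Matrix.cons_dotProduct,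
    Matrix.dotProduct_of_isEmpty, RingHom.map_one, Complex.star_def, one_mul, zero_mul,
    neg_one_mul, add_zero, zero_add]
  have h1 : starRingEnd ℂ (l j) - l i ≠ 0 := sub_ne_zero.mpr hci
  have h2 : starRingEnd ℂ (l j) + l i ≠ 0 := by
    intro h; exact hci' (by linear_combination h)
  have h3 : -(starRingEnd ℂ (l j)) + l i ≠ 0 := fun h => hci (by linear_combination -h)
  have h3 : l i - starRingEnd ℂ (l j) ≠ 0 := sub_ne_zero.mpr (fun h => hci h.symm)
  have h4 : l i + starRingEnd ℂ (l j) ≠ 0 := fun h => hci' (by linear_combination h)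
  rw [div_sub_div _ _ h1 h2, div_sub_div _ _ h3 h4, div_mul_eq_mul_div,
    div_mul_eq_mul_div, ← neg_div, div_eq_div_iff (mul_ne_zero h1 h2) (mul_ne_zero h3 h4)]
  ring_nf
  simp only [Complex.I_sq]
  ring
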